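/- arXiv:2604.04217 — 2 statements merged into one kernel-verified Lean document; each statement's English description precedes it below -/
import Mathlib

section
/- For points p, v ∈ ℝ³ with v ≠ 0, let ρ = ‖v‖, u = v/ρ. The second-order Taylor remainder bound: ‖v − p‖ = ρ − ⟨u, p⟩ + (‖p‖² − ⟨u,p⟩²)/(2ρ) + E, where |E| ≤ ‖p‖³/(2ρ²) whenever ‖p‖ ≤ ρ/2. -/
open scoped RealInnerProductSpace

open EuclideanSpace

set_option maxHeartbeats 1000000 in
lemma fresnel_real (ρ D n a : ℝ) (hρ : 0 < ρ) (hD : 0 ≤ D) (hn : 0 ≤ n)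
    (ha : |a| ≤ n) (hn2 : n ≤ ρ / 2) (hD2 : D ^ 2 = ρ ^ 2 - 2 * a * ρ + n ^ 2) :
    ∃ E : ℝ, D = ρ - a + (n ^ 2 - a ^ 2) / (2 * ρ) + E ∧ |E| ≤ n ^ 3 / (2 * ρ ^ 2) := by
  obtain ⟨ha1, ha2⟩ := abs_le.mp ha
  have ha0 := abs_nonneg a
  have hsq : a ^ 2 ≤ n ^ 2 := by nlinarith [sq_abs a]
  have hb2 : (0:ℝ) ≤ n ^ 2 - a ^ 2 := by linarith
  have hDge : ρ - n ≤ D := by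
    nlinarith [mul_nonneg hρ.le (sub_nonneg.mpr ha2), (by linarith : (0:ℝ) < ρ - n + D)]
  have hQpos : (0:ℝ) < (D + ρ) ^ 2 - a ^ 2 := by
    nlinarith [sq_abs a, mul_le_mul_of_nonneg_left ha ha0, (by linarith : |a| < D + ρ)]
  have hcube : 2 * |a| * (n ^ 2 - a ^ 2) ≤ n ^ 3 := by
    refine le_of_pow_le_pow_left₀ (n := 2) (by norm_num) (by positivity) ?_
    have hrw : (2 * |a| * (n ^ 2 - a ^ 2)) ^ 2 = 4 * a ^ 2 * (n ^ 2 - a ^ 2) ^ 2 := by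
      rw [mul_pow, mul_pow, sq_abs]; ring
    rw [hrw]
    nlinarith [mul_nonneg (sq_nonneg n) (sq_nonneg (2 * a ^ 2 - n ^ 2)),
      mul_nonneg (sq_nonneg (a ^ 2)) hb2]
  refine ⟨D - (ρ - a + (n ^ 2 - a ^ 2) / (2 * ρ)), by ring, ?_⟩
  have key : (2 * ρ * D - (2 * ρ * ρ - 2 * a * ρ + (n ^ 2 - a ^ 2))) * ((D + ρ) ^ 2 - a ^ 2)
      = (n ^ 2 - a ^ 2) * (4 * a * ρ - (n ^ 2 - a ^ 2)) := by
    linear_combination (2 * ρ * (D + ρ + a) - (n ^ 2 - a ^ 2)) * hD2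
  have hE : (D - (ρ - a + (n ^ 2 - a ^ 2) / (2 * ρ))) * (2 * ρ * ((D + ρ) ^ 2 - a ^ 2))
      = (n ^ 2 - a ^ 2) * (4 * a * ρ - (n ^ 2 - a ^ 2)) := by
    rw [← key]
    field_simp
  -- Q lower bounds
  have hQ2 : 2 * ρ ^ 2 ≤ (D + ρ) ^ 2 - a ^ 2 := by
    nlinarith [mul_nonneg (by linarith : (0:ℝ) ≤ D - ρ + n) (by linarith : (0:ℝ) ≤ D + 3 * ρ - n),
      mul_nonneg hρ.le (by linarith : (0:ℝ) ≤ ρ - 2 * n)]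
  -- chain pieces
  have e1 : ρ * (n ^ 2 - a ^ 2) * (n ^ 2 - a ^ 2) ≤ ρ * n ^ 2 * (n ^ 2 - a ^ 2) :=
    mul_le_mul_of_nonneg_right (by nlinarith [mul_nonneg hρ.le (sq_nonneg a)]) hb2
  have e2 : ρ * n ^ 2 * (n ^ 2 - a ^ 2) ≤ ρ * n ^ 2 * n ^ 2 :=
    mul_le_mul_of_nonneg_left (by nlinarith [sq_nonneg a]) (by positivity)
  have e3 : ρ * n ^ 2 * n ^ 2 ≤ 2 * ρ ^ 2 * n ^ 3 := by
    nlinarith [mul_nonneg hρ.le (mul_nonneg (pow_nonneg hn 2) (by linarith : (0:ℝ) ≤ ρ / 2 - n)),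
      mul_nonneg hρ.le (pow_nonneg hn 3)]
  have e4 : 2 * ρ ^ 2 * n ^ 3 ≤ ((D + ρ) ^ 2 - a ^ 2) * n ^ 3 :=
    mul_le_mul_of_nonneg_right hQ2 (pow_nonneg hn 3)
  have h1 : ρ * ((n ^ 2 - a ^ 2) * (4 * a * ρ - (n ^ 2 - a ^ 2))) ≤ n ^ 3 * ((D + ρ) ^ 2 - a ^ 2) := by
    rcases le_or_gt 0 a with hA | hA
    · rw [abs_of_nonneg hA] at hcube
      have g1 : 0 ≤ ρ * (n ^ 2 - a ^ 2) * (n ^ 2 - a ^ 2) :=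
        mul_nonneg (mul_nonneg hρ.le hb2) hb2
      have g2 : 2 * ρ ^ 2 * (2 * a * (n ^ 2 - a ^ 2)) ≤ 2 * ρ ^ 2 * n ^ 3 :=
        mul_le_mul_of_nonneg_left hcube (by positivity)
      linarith [e4, g1, g2]
    · have hneg : (n ^ 2 - a ^ 2) * (4 * a * ρ - (n ^ 2 - a ^ 2)) ≤ 0 :=
        mul_nonpos_of_nonneg_of_nonpos hb2 (by nlinarith)
      have h0 : ρ * ((n ^ 2 - a ^ 2) * (4 * a * ρ - (n ^ 2 - a ^ 2))) ≤ 0 :=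
        mul_nonpos_of_nonneg_of_nonpos hρ.le hneg
      have := mul_nonneg (pow_nonneg hn 3) hQpos.le
      linarith
  have h2 : -(ρ * ((n ^ 2 - a ^ 2) * (4 * a * ρ - (n ^ 2 - a ^ 2)))) ≤ n ^ 3 * ((D + ρ) ^ 2 - a ^ 2) := by
    rcases le_or_gt 0 a with hA | hA
    · have g1 : 0 ≤ 4 * a * ρ ^ 2 * (n ^ 2 - a ^ 2) := by positivity
      linarith [e1, e2, e3, e4, g1]
    · rw [abs_of_neg hA] at hcube
      have hDge2 : ρ - a ≤ D := by
        nlinarith [(by linarith : (0:ℝ) < ρ - a + D)]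
      have hQ3 : 4 * ρ ^ 2 - 4 * ρ * a ≤ (D + ρ) ^ 2 - a ^ 2 := by
        nlinarith [mul_nonneg (by linarith : (0:ℝ) ≤ D - ρ + a) (by linarith : (0:ℝ) ≤ D + 3 * ρ - a)]
      have f1 : 2 * ρ ^ 2 * (2 * -a * (n ^ 2 - a ^ 2)) ≤ 2 * ρ ^ 2 * n ^ 3 :=
        mul_le_mul_of_nonneg_left hcube (by positivity)
      have f2 : 0 ≤ -(4 * ρ * a) * n ^ 3 :=
        mul_nonneg (by nlinarith : (0:ℝ) ≤ -(4 * ρ * a)) (pow_nonneg hn 3)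
      have f3 : (4 * ρ ^ 2 - 4 * ρ * a) * n ^ 3 ≤ ((D + ρ) ^ 2 - a ^ 2) * n ^ 3 :=
        mul_le_mul_of_nonneg_right hQ3 (pow_nonneg hn 3)
      have f4 : 0 ≤ 2 * ρ ^ 2 * n ^ 3 := by positivity
      linarith [e1, e2, e3, f1, f2, f3, f4]
  -- conclude
  have h2ρQ : (0:ℝ) < 2 * ρ * ((D + ρ) ^ 2 - a ^ 2) :=
    mul_pos (by linarith) hQpos
  have habsK : |ρ * ((n ^ 2 - a ^ 2) * (4 * a * ρ - (n ^ 2 - a ^ 2)))|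
      ≤ n ^ 3 * ((D + ρ) ^ 2 - a ^ 2) := abs_le.mpr ⟨by linarith, h1⟩
  rw [abs_mul, abs_of_pos hρ] at habsK
  have hEeq : D - (ρ - a + (n ^ 2 - a ^ 2) / (2 * ρ))
      = ((n ^ 2 - a ^ 2) * (4 * a * ρ - (n ^ 2 - a ^ 2))) / (2 * ρ * ((D + ρ) ^ 2 - a ^ 2)) :=
    (eq_div_iff (ne_of_gt h2ρQ)).mpr hE
  rw [hEeq, abs_div, abs_of_pos h2ρQ, div_le_div_iff₀ h2ρQ (by positivity)]
  have := mul_le_mul_of_nonneg_left habsK (by linarith : (0:ℝ) ≤ 2 * ρ)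
  linarith [this]

/-- Second-order Fresnel expansion with remainder bound in ℝ³. -/
theorem fresnel_second_order (p v : EuclideanSpace ℝ (Fin 3)) (hv : v ≠ 0)
    (hp : ‖p‖ ≤ ‖v‖ / 2) :
    ∃ E : ℝ,
      ‖v - p‖ = ‖v‖ - ⟪(‖v‖)⁻¹ • v, p⟫
          + (‖p‖ ^ 2 - ⟪(‖v‖)⁻¹ • v, p⟫ ^ 2) / (2 * ‖v‖) + E
        ∧ |E| ≤ ‖p‖ ^ 3 / (2 * ‖v‖ ^ 2) := by
  have hρ : (0:ℝ) < ‖v‖ := norm_pos_iff.mpr hv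
  have hu : ‖(‖v‖)⁻¹ • v‖ = 1 := by
    rw [norm_smul, norm_inv, norm_norm, inv_mul_cancel₀ (ne_of_gt hρ)]
  have ha : |⟪(‖v‖)⁻¹ • v, p⟫| ≤ ‖p‖ := by
    calc |⟪(‖v‖)⁻¹ • v, p⟫| ≤ ‖(‖v‖)⁻¹ • v‖ * ‖p‖ := abs_real_inner_le_norm _ _
    _ = ‖p‖ := by rw [hu, one_mul]
  have hD2 : ‖v - p‖ ^ 2 = ‖v‖ ^ 2 - 2 * ⟪(‖v‖)⁻¹ • v, p⟫ * ‖v‖ + ‖p‖ ^ 2 := by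
    have h1 : ⟪(‖v‖)⁻¹ • v, p⟫ = (‖v‖)⁻¹ * ⟪v, p⟫ := real_inner_smul_left v p _
    have h2 : ‖v - p‖ ^ 2 = ‖v‖ ^ 2 - 2 * ⟪v, p⟫ + ‖p‖ ^ 2 := norm_sub_sq_real v p
    rw [h2, h1]
    field_simp
  exact fresnel_real ‖v‖ ‖v - p‖ ‖p‖ ⟪(‖v‖)⁻¹ • v, p⟫ hρ (norm_nonneg _) (norm_nonneg _)
    ha hp hD2
end

section
/- For v ∈ ℝⁿ with ‖v‖ = ρ > 0 and p ∈ ℝⁿ with ‖p‖ < ρ, the distance satisfies the two-sided bound ρ − ⟨u, p⟩ ≤ ‖v − p‖ ≤ ρ − ⟨u, p⟩ + ‖P⊥ p‖²/(2(ρ − ‖p‖)), where u = v/ρ and P⊥ p = p − ⟨u,p⟩u. -/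
open scoped RealInnerProductSpace

/-- Two-sided near-field Fresnel bound on the distance ‖v − p‖. -/
theorem two_sided_fresnel_bound (n : ℕ) (v p : EuclideanSpace ℝ (Fin n))
    (rho : ℝ) (hrho : ‖v‖ = rho) (hrho0 : 0 < rho) (hp : ‖p‖ < rho) :
    rho - ⟪rho⁻¹ • v, p⟫ ≤ ‖v - p‖ ∧
    ‖v - p‖ ≤ rho - ⟪rho⁻¹ • v, p⟫
        + ‖p - ⟪rho⁻¹ • v, p⟫ • (rho⁻¹ • v)‖ ^ 2 / (2 * (rho - ‖p‖)) := by
  set u := rho⁻¹ • v with hu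
  have hunorm : ‖u‖ = 1 := by
    rw [hu, norm_smul, Real.norm_eq_abs, abs_inv, abs_of_pos hrho0, hrho]
    field_simp
  set a := ⟪u, p⟫ with ha
  have haabs : |a| ≤ ‖p‖ := by
    calc |a| ≤ ‖u‖ * ‖p‖ := abs_real_inner_le_norm u p
    _ = ‖p‖ := by rw [hunorm, one_mul]
  have haabs' := abs_le.mp haabs
  have hvp : ⟪v, p⟫ = rho * a := by
    rw [ha, hu, real_inner_smul_left]
    field_simp
  have hr2 : ‖v - p‖ ^ 2 = (rho - a) ^ 2 + (‖p‖ ^ 2 - a ^ 2) := by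
    rw [@norm_sub_sq_real, hvp, hrho]; ring
  have hperp : ‖p - a • u‖ ^ 2 = ‖p‖ ^ 2 - a ^ 2 := by
    rw [@norm_sub_sq_real, real_inner_smul_right, real_inner_comm, ← ha,
      norm_smul, Real.norm_eq_abs, hunorm, mul_pow, sq_abs]
    ring
  have hD : 0 ≤ ‖p‖ ^ 2 - a ^ 2 := by nlinarith [norm_nonneg p]
  have hra : rho - a ≤ ‖v - p‖ := by
    nlinarith [norm_nonneg (v - p), norm_nonneg p]
  refine ⟨hra, ?_⟩
  rw [hperp]
  have hpos : 0 < 2 * (rho - ‖p‖) := by linarith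
  have key : (‖v - p‖ - (rho - a)) * (2 * (rho - ‖p‖)) ≤ ‖p‖ ^ 2 - a ^ 2 := by
    nlinarith [norm_nonneg (v - p)]
  have := (le_div_iff₀ hpos).mpr key
  linarith
end
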